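/- Let G be a finite bipartite graph with bipartition (U, V), let a ∈ U and b ∈ V, and suppose that either a and b lie in different connected components of G, or the graph distance between a and b in G is at least 4. Then there exists an optimal bicluster editing H of G in which a and b are not adjacent. -/

import Mathlib

variable {α : Type*}

/-- `G` is a bipartite graph with bipartition `(U, V)`: the parts cover the vertex set,
are disjoint, and every edge joins a vertex of `U` to a vertex of `V`. -/
def IsBipartiteWith (G : SimpleGraph α) (U V : Set α) : Prop :=
  (∀ x, x ∈ U ∨ x ∈ V) ∧ Disjoint U V ∧
    ∀ ⦃x y⦄, G.Adj x y → (x ∈ U ∧ y ∈ V) ∨ (x ∈ V ∧ y ∈ U)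

/-- A bicluster graph with bipartition `(U, V)`: a bipartite graph each of whose connected
components is a complete bipartite graph, i.e. any two vertices of `U` and `V` lying in the
same connected component are adjacent. -/
def IsBiclusterGraph (G : SimpleGraph α) (U V : Set α) : Prop :=
  IsBipartiteWith G U V ∧ ∀ i ∈ U, ∀ j ∈ V, G.Reachable i j → G.Adj i j

/-- `G` contains the path on four vertices `P4` as an induced subgraph. -/
def HasInducedP4 (G : SimpleGraph α) : Prop :=
  ∃ a b c d : α, a ≠ b ∧ a ≠ c ∧ a ≠ d ∧ b ≠ c ∧ b ≠ d ∧ c ≠ d ∧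
    G.Adj a b ∧ G.Adj b c ∧ G.Adj c d ∧ ¬ G.Adj a c ∧ ¬ G.Adj b d ∧ ¬ G.Adj a d

/-- The edit cost of `H` relative to `G`: number of edge deletions plus edge additions. -/
noncomputable def editCost (G H : SimpleGraph α) : ℕ :=
  (G.edgeSet \ H.edgeSet).ncard + (H.edgeSet \ G.edgeSet).ncard

/-- `H` is an optimal bicluster editing of `G` with respect to the bipartition `(U, V)`. -/
def IsOptimalBiclusterEditing (G H : SimpleGraph α) (U V : Set α) : Prop :=
  IsBiclusterGraph H U V ∧
    ∀ H' : SimpleGraph α, IsBiclusterGraph H' U V → editCost G H ≤ editCost G H'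

/-- The grouping efficacy `(m - d) / (m + a)` of `H` relative to `G`, where `m = |E(G)|`,
`d` is the number of deleted edges and `a` the number of added edges. -/
noncomputable def efficacy (G H : SimpleGraph α) : ℝ :=
  ((G.edgeSet.ncard : ℝ) - ((G.edgeSet \ H.edgeSet).ncard : ℝ)) /
    ((G.edgeSet.ncard : ℝ) + ((H.edgeSet \ G.edgeSet).ncard : ℝ))

def splitGraph (H : SimpleGraph α) (S : Set α) : SimpleGraph α where
  Adj x y := H.Adj x y ∧ (x ∈ S ↔ y ∈ S)
  symm := ⟨fun x y ⟨h, h'⟩ => ⟨h.symm, h'.symm⟩⟩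
  loopless := ⟨fun x ⟨h, _⟩ => H.loopless.irrefl x h⟩

lemma splitGraph_reachable {H : SimpleGraph α} {S : Set α} {i j : α}
    (h : (splitGraph H S).Reachable i j) : H.Reachable i j ∧ (i ∈ S ↔ j ∈ S) := by
  obtain ⟨w⟩ := h
  induction w with
  | nil => exact ⟨SimpleGraph.Reachable.refl _, Iff.rfl⟩
  | cons h p ih =>
    obtain ⟨h1, h2⟩ := h
    exact ⟨(SimpleGraph.Adj.reachable h1).trans ih.1, h2.trans ih.2⟩

lemma splitGraph_bicluster {H : SimpleGraph α} {U V S : Set α}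
    (hH : IsBiclusterGraph H U V) : IsBiclusterGraph (splitGraph H S) U V := by
  refine ⟨⟨hH.1.1, hH.1.2.1, fun x y hxy => hH.1.2.2 hxy.1⟩, ?_⟩
  intro i hi j hj hr
  obtain ⟨hr', hS⟩ := splitGraph_reachable hr
  exact ⟨hH.2 i hi j hj hr', hS⟩

lemma ncard_prod' {β γ : Type*} (s : Set β) (t : Set γ) :
    (s ×ˢ t).ncard = s.ncard * t.ncard := by
  rw [← Nat.card_coe_set_eq, ← Nat.card_coe_set_eq, ← Nat.card_coe_set_eq,
    Nat.card_congr (Equiv.Set.prod s t), Nat.card_prod]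

lemma editCost_le_of_le [Fintype α] {G H H' : SimpleGraph α}
    (hsub : H'.edgeSet ⊆ H.edgeSet)
    (hc : 2 * ((H.edgeSet \ H'.edgeSet) ∩ G.edgeSet).ncard ≤ (H.edgeSet \ H'.edgeSet).ncard) :
    editCost G H' ≤ editCost G H := by
  classical
  set P := H.edgeSet \ H'.edgeSet with hP
  have h1 : G.edgeSet \ H'.edgeSet = (G.edgeSet \ H.edgeSet) ∪ (P ∩ G.edgeSet) := by
    ext e
    constructor
    · rintro ⟨heG, heH'⟩
      by_cases heH : e ∈ H.edgeSet
      · exact Or.inr ⟨⟨heH, heH'⟩, heG⟩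
      · exact Or.inl ⟨heG, heH⟩
    · rintro (⟨heG, heH⟩ | ⟨⟨heH, heH'⟩, heG⟩)
      · exact ⟨heG, fun h => heH (hsub h)⟩
      · exact ⟨heG, heH'⟩
  have h2 : H.edgeSet \ G.edgeSet = (H'.edgeSet \ G.edgeSet) ∪ (P \ G.edgeSet) := by
    ext e
    constructor
    · rintro ⟨heH, heG⟩
      by_cases heH' : e ∈ H'.edgeSet
      · exact Or.inl ⟨heH', heG⟩
      · exact Or.inr ⟨⟨heH, heH'⟩, heG⟩
    · rintro (⟨heH', heG⟩ | ⟨⟨heH, _⟩, heG⟩)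
      · exact ⟨hsub heH', heG⟩
      · exact ⟨heH, heG⟩
  have d1 : Disjoint (G.edgeSet \ H.edgeSet) (P ∩ G.edgeSet) := by
    rw [Set.disjoint_left]
    rintro e ⟨_, heH⟩ ⟨⟨heH', _⟩, _⟩
    exact heH heH'
  have d2 : Disjoint (H'.edgeSet \ G.edgeSet) (P \ G.edgeSet) := by
    rw [Set.disjoint_left]
    rintro e ⟨heH', _⟩ ⟨⟨_, h⟩, _⟩
    exact h heH'
  have c1 : (G.edgeSet \ H'.edgeSet).ncard
      = (G.edgeSet \ H.edgeSet).ncard + (P ∩ G.edgeSet).ncard := by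
    rw [h1, Set.ncard_union_eq d1 (Set.toFinite _) (Set.toFinite _)]
  have c2 : (H.edgeSet \ G.edgeSet).ncard
      = (H'.edgeSet \ G.edgeSet).ncard + (P \ G.edgeSet).ncard := by
    rw [h2, Set.ncard_union_eq d2 (Set.toFinite _) (Set.toFinite _)]
  have c3 : (P ∩ G.edgeSet).ncard + (P \ G.edgeSet).ncard = P.ncard :=
    Set.ncard_inter_add_ncard_diff_eq_ncard P G.edgeSet (Set.toFinite _)
  unfold editCost
  omega

lemma exists_optimal (G : SimpleGraph α) (U V : Set α) (hG : IsBipartiteWith G U V) :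
    ∃ H, IsOptimalBiclusterEditing G H U V := by
  have hbot : IsBiclusterGraph (⊥ : SimpleGraph α) U V := by
    refine ⟨⟨hG.1, hG.2.1, fun x y h => h.elim⟩, ?_⟩
    intro i hi j hj hr
    rw [SimpleGraph.reachable_bot] at hr
    subst hr
    exact absurd hj (Set.disjoint_left.mp hG.2.1 hi)
  have hne : (editCost G '' {H | IsBiclusterGraph H U V}).Nonempty := ⟨_, ⟨⊥, hbot, rfl⟩⟩
  obtain ⟨H, hH, hcost⟩ := Nat.sInf_mem hne
  exact ⟨H, hH, fun H' hH' => hcost ▸ Nat.sInf_le ⟨H', hH', rfl⟩⟩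
lemma splitGraph_adj {H : SimpleGraph α} {S : Set α} {x y : α} :
    (splitGraph H S).Adj x y ↔ H.Adj x y ∧ (x ∈ S ↔ y ∈ S) := Iff.rfl
/-- Variable-fixing rule: if `a ∈ U`, `b ∈ V` lie in different components of `G` or are at
distance at least `4`, then some optimal bicluster editing has `a`, `b` non-adjacent. -/
theorem exists_optimal_editing_not_adj [Fintype α] (G : SimpleGraph α) (U V : Set α)
    (hG : IsBipartiteWith G U V) (a b : α) (ha : a ∈ U) (hb : b ∈ V)
    (hab : ¬ G.Reachable a b ∨ 4 ≤ G.dist a b) :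
    ∃ H : SimpleGraph α, IsOptimalBiclusterEditing G H U V ∧ ¬ H.Adj a b := by
  classical
  obtain ⟨H, hHopt⟩ := exists_optimal G U V hG
  by_cases hAdj : H.Adj a b
  swap
  · exact ⟨H, hHopt, hAdj⟩
  have hHb := hHopt.1
  have key1 : ¬ G.Adj a b := by
    intro h
    rcases hab with h4 | h4
    · exact h4 h.reachable
    · have := SimpleGraph.dist_le (SimpleGraph.Walk.cons h SimpleGraph.Walk.nil)
      simp at this
      omega
  have key3 : ∀ u v, G.Adj a v → G.Adj v u → G.Adj u b → False := by
    intro u v h1 h2 h3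
    rcases hab with h4 | h4
    · exact h4 ((h1.reachable).trans ((h2.reachable).trans h3.reachable))
    · have := SimpleGraph.dist_le
        (SimpleGraph.Walk.cons h1 (SimpleGraph.Walk.cons h2
          (SimpleGraph.Walk.cons h3 SimpleGraph.Walk.nil)))
      simp at this
      omega
  set R : Set α := H.neighborSet b with hRdef
  set C : Set α := H.neighborSet a with hCdef
  have haR : a ∈ R := hAdj.symm
  have hbC : b ∈ C := hAdj
  have haC : a ∉ C := fun h => H.loopless.irrefl a h
  have hdisj := hHb.1.2.1
  have hRU : ∀ u ∈ R, u ∈ U := by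
    intro u hu
    have hu' : H.Adj b u := hu
    rcases hHb.1.2.2 hu' with ⟨hbU, _⟩ | ⟨_, huU⟩
    · exact absurd hb (Set.disjoint_left.mp hdisj hbU)
    · exact huU
  have hCV : ∀ v ∈ C, v ∈ V := by
    intro v hv
    have hv' : H.Adj a v := hv
    rcases hHb.1.2.2 hv' with ⟨_, hvV⟩ | ⟨haV, _⟩
    · exact hvV
    · exact absurd haV (Set.disjoint_left.mp hdisj ha)
  have hRCd : ∀ x, x ∈ R → x ∈ C → False :=
    fun x h1 h2 => (Set.disjoint_left.mp hdisj (hRU x h1)) (hCV x h2)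
  have hRC : ∀ u ∈ R, ∀ v ∈ C, H.Adj u v := by
    intro u hu v hv
    have hu' : H.Adj b u := hu
    have hv' : H.Adj a v := hv
    exact hHb.2 u (hRU u hu) v (hCV v hv)
      ((hu'.symm.reachable).trans ((hAdj.symm.reachable).trans hv'.reachable))
  have hNR : ∀ v ∈ C, ∀ w, H.Adj v w → w ∈ R := by
    intro v hv w hw
    have hv' : H.Adj a v := hv
    have hwU : w ∈ U := by
      rcases hHb.1.2.2 hw with ⟨hvU, _⟩ | ⟨_, hwU⟩
      · exact absurd (hCV v hv) (Set.disjoint_left.mp hdisj hvU)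
      · exact hwU
    have : H.Adj w b := hHb.2 w hwU b hb
      ((hw.symm.reachable).trans ((hv'.symm.reachable).trans hAdj.reachable))
    exact this.symm
  set X : Set α := G.neighborSet a ∩ C with hXdef
  set Y : Set α := G.neighborSet b ∩ R with hYdef
  have hXC : X ⊆ C := Set.inter_subset_right
  have hYR : Y ⊆ R := Set.inter_subset_right
  have haY : a ∉ Y := fun h => key1 (h.1 : G.Adj b a).symm
  have hbX : b ∉ X := fun h => key1 h.1
  by_cases hcase : 2 * Y.ncard ≤ R.ncard
  · -- isolate b
    have hsub : (splitGraph H {b}).edgeSet ⊆ H.edgeSet :=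
      SimpleGraph.edgeSet_mono (fun x y h => h.1)
    have hPdesc : H.edgeSet \ (splitGraph H {b}).edgeSet = (fun u => s(b, u)) '' R := by
      ext e
      induction e using Sym2.ind with
      | _ x y =>
        constructor
        · rintro ⟨hxy, hne⟩
          have hxy' : H.Adj x y := (SimpleGraph.mem_edgeSet _).mp hxy
          have hne' : ¬ (x ∈ ({b} : Set α) ↔ y ∈ ({b} : Set α)) := fun h =>
            hne ((SimpleGraph.mem_edgeSet _).mpr (splitGraph_adj.mpr ⟨hxy', h⟩))
          simp only [Set.mem_singleton_iff] at hne'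
          by_cases hx : x = b
          · subst hx
            exact ⟨y, hxy', rfl⟩
          · have hy : y = b := by tauto
            subst hy
            exact ⟨x, hxy'.symm, Sym2.eq_swap⟩
        · rintro ⟨u, hu, hEq⟩
          rw [← hEq]
          have hu' : H.Adj b u := hu
          refine ⟨(SimpleGraph.mem_edgeSet _).mpr hu', fun hmem => ?_⟩
          have hiff := (splitGraph_adj.mp ((SimpleGraph.mem_edgeSet _).mp hmem)).2
          have : u = b := hiff.mp rfl
          exact hu'.ne this.symm
    have hinjR : Set.InjOn (fun u => s(b, u)) R :=
      fun u _ u' _ h => Sym2.congr_right.mp h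
    have hPG : (H.edgeSet \ (splitGraph H {b}).edgeSet) ∩ G.edgeSet
        = (fun u => s(b, u)) '' Y := by
      rw [hPdesc]
      ext e
      constructor
      · rintro ⟨⟨u, hu, rfl⟩, heG⟩
        exact ⟨u, ⟨(SimpleGraph.mem_edgeSet _).mp heG, hu⟩, rfl⟩
      · rintro ⟨u, ⟨hGu, hu⟩, rfl⟩
        exact ⟨⟨u, hu, rfl⟩, (SimpleGraph.mem_edgeSet _).mpr hGu⟩
    have hc : 2 * ((H.edgeSet \ (splitGraph H {b}).edgeSet) ∩ G.edgeSet).ncard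
        ≤ (H.edgeSet \ (splitGraph H {b}).edgeSet).ncard := by
      rw [hPG, hPdesc, Set.ncard_image_of_injOn (hinjR.mono hYR),
        Set.ncard_image_of_injOn hinjR]
      exact hcase
    refine ⟨splitGraph H {b}, ⟨splitGraph_bicluster hHb,
      fun H'' hH'' => le_trans (editCost_le_of_le hsub hc) (hHopt.2 H'' hH'')⟩, ?_⟩
    intro h
    exact hAdj.ne (h.2.mpr rfl)
  · -- split off {a} ∪ X
    push_neg at hcase
    set S : Set α := insert a X with hSdef
    have haS : a ∈ S := Set.mem_insert a X
    have hXS : X ⊆ S := Set.subset_insert a X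
    have hbS : b ∉ S := by
      intro h
      rcases Set.mem_insert_iff.mp h with h | h
      · exact hAdj.ne h.symm
      · exact hbX h
    have hsub : (splitGraph H S).edgeSet ⊆ H.edgeSet :=
      SimpleGraph.edgeSet_mono (fun x y h => h.1)
    have hPdesc : H.edgeSet \ (splitGraph H S).edgeSet
        = (fun v => s(a, v)) '' (C \ X)
          ∪ (fun p : α × α => s(p.1, p.2)) '' ((R \ {a}) ×ˢ X) := by
      ext e
      induction e using Sym2.ind with
      | _ x y =>
        constructor
        · rintro ⟨hxy, hne⟩
          have hxy' : H.Adj x y := (SimpleGraph.mem_edgeSet _).mp hxy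
          have hne' : ¬ (x ∈ S ↔ y ∈ S) := fun h =>
            hne ((SimpleGraph.mem_edgeSet _).mpr (splitGraph_adj.mpr ⟨hxy', h⟩))
          have main : ∀ x y : α, H.Adj x y → x ∈ S → y ∉ S →
              s(x, y) ∈ (fun v => s(a, v)) '' (C \ X)
                ∪ (fun p : α × α => s(p.1, p.2)) '' ((R \ {a}) ×ˢ X) := by
            intro x y hxy hxS hyS
            rcases Set.mem_insert_iff.mp hxS with rfl | hxX
            · have hyC : y ∈ C := hxy
              exact Or.inl ⟨y, ⟨hyC, fun h => hyS (hXS h)⟩, rfl⟩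
            · have hyR : y ∈ R := hNR x (hXC hxX) y hxy
              have hya : y ∉ ({a} : Set α) := fun h => hyS (by
                rw [Set.mem_singleton_iff] at h
                exact h ▸ haS)
              exact Or.inr ⟨(y, x), ⟨⟨hyR, hya⟩, hxX⟩, Sym2.eq_swap⟩
          by_cases hxS : x ∈ S
          · have hyS : y ∉ S := fun h => hne' ⟨fun _ => h, fun _ => hxS⟩
            exact main x y hxy' hxS hyS
          · have hyS : y ∈ S := by
              by_contra hyS
              exact hne' (iff_of_false hxS hyS)
            rw [Sym2.eq_swap]
            exact main y x hxy'.symm hyS hxS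
        · intro h
          rcases h with ⟨v, ⟨hvC, hvX⟩, hEq⟩ | ⟨⟨u, v⟩, ⟨⟨huR, hua⟩, hvX⟩, hEq⟩
          · rw [← hEq]
            have hv' : H.Adj a v := hvC
            refine ⟨(SimpleGraph.mem_edgeSet _).mpr hv', fun hmem => ?_⟩
            have hiff := (splitGraph_adj.mp ((SimpleGraph.mem_edgeSet _).mp hmem)).2
            rcases Set.mem_insert_iff.mp (hiff.mp haS) with h | h
            · exact hv'.ne h.symm
            · exact hvX h
          · rw [← hEq]
            have huv : H.Adj u v := hRC u huR v (hXC hvX)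
            refine ⟨(SimpleGraph.mem_edgeSet _).mpr huv, fun hmem => ?_⟩
            have hiff := (splitGraph_adj.mp ((SimpleGraph.mem_edgeSet _).mp hmem)).2
            rcases Set.mem_insert_iff.mp (hiff.mpr (hXS hvX)) with h | h
            · exact hua h
            · exact hRCd u huR (hXC h)
    have hPG : (H.edgeSet \ (splitGraph H S).edgeSet) ∩ G.edgeSet
        ⊆ (fun p : α × α => s(p.1, p.2)) '' (((R \ {a}) \ Y) ×ˢ X) := by
      rw [hPdesc]
      rintro e ⟨he, heG⟩
      rcases he with ⟨v, ⟨hvC, hvX⟩, rfl⟩ | ⟨⟨u, v⟩, ⟨⟨huR, hua⟩, hvX⟩, rfl⟩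
      · exact absurd ⟨(SimpleGraph.mem_edgeSet _).mp heG, hvC⟩ hvX
      · have huv : G.Adj u v := (SimpleGraph.mem_edgeSet _).mp heG
        have hunY : u ∉ Y := by
          intro hY
          exact key3 u v hvX.1 huv.symm (hY.1 : G.Adj b u).symm
        exact ⟨(u, v), ⟨⟨⟨huR, hua⟩, hunY⟩, hvX⟩, rfl⟩
    have hinjC : Set.InjOn (fun v => s(a, v)) (C \ X) :=
      fun u _ u' _ h => Sym2.congr_right.mp h
    have hinjProd : Set.InjOn (fun p : α × α => s(p.1, p.2)) ((R \ {a}) ×ˢ X) := by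
      rintro ⟨u, v⟩ ⟨⟨huR, _⟩, hvX⟩ ⟨u', v'⟩ ⟨⟨huR', _⟩, hvX'⟩ h
      rw [Sym2.eq_iff] at h
      rcases h with ⟨h1, h2⟩ | ⟨h1, h2⟩
      · have h1' : u = u' := h1
        have h2' : v = v' := h2
        subst h1'
        subst h2'
        rfl
      · have h1' : u = v' := h1
        subst h1'
        exact absurd (hXC hvX') fun hc' => hRCd u huR hc'
    have hdisjP : Disjoint ((fun v => s(a, v)) '' (C \ X))
        ((fun p : α × α => s(p.1, p.2)) '' ((R \ {a}) ×ˢ X)) := by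
      rw [Set.disjoint_left]
      rintro e ⟨v, ⟨hvC, hvnX⟩, rfl⟩ ⟨⟨u, v'⟩, ⟨⟨huR, _⟩, hvX'⟩, hEq⟩
      rw [Sym2.eq_iff] at hEq
      rcases hEq with ⟨h1, h2⟩ | ⟨h1, h2⟩
      · have h2' : v' = v := h2
        exact hvnX (h2' ▸ hvX')
      · have h2' : v' = a := h2
        exact haC (hXC (h2' ▸ hvX'))
    have hRa : (R \ {a}).ncard = R.ncard - 1 := Set.ncard_diff_singleton_of_mem haR
    have hYsub : Y ⊆ R \ {a} := fun u hu =>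
      ⟨hYR hu, fun h => haY ((Set.mem_singleton_iff.mp h) ▸ hu)⟩
    have hRaY : ((R \ {a}) \ Y).ncard = R.ncard - 1 - Y.ncard := by
      rw [Set.ncard_diff hYsub, hRa]
    have hCX : (C \ X).ncard = C.ncard - X.ncard := Set.ncard_diff hXC
    have hPcard : (H.edgeSet \ (splitGraph H S).edgeSet).ncard
        = (C.ncard - X.ncard) + (R.ncard - 1) * X.ncard := by
      rw [hPdesc, Set.ncard_union_eq hdisjP (Set.toFinite _) (Set.toFinite _),
        Set.ncard_image_of_injOn hinjC, Set.ncard_image_of_injOn hinjProd,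
        ncard_prod', hCX, hRa]
    have hPGcard : ((H.edgeSet \ (splitGraph H S).edgeSet) ∩ G.edgeSet).ncard
        ≤ (R.ncard - 1 - Y.ncard) * X.ncard := by
      calc ((H.edgeSet \ (splitGraph H S).edgeSet) ∩ G.edgeSet).ncard
          ≤ ((fun p : α × α => s(p.1, p.2)) '' (((R \ {a}) \ Y) ×ˢ X)).ncard :=
            Set.ncard_le_ncard hPG (Set.toFinite _)
        _ ≤ (((R \ {a}) \ Y) ×ˢ X).ncard := Set.ncard_image_le (Set.toFinite _)
        _ = (R.ncard - 1 - Y.ncard) * X.ncard := by rw [ncard_prod', hRaY]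
    have hc : 2 * ((H.edgeSet \ (splitGraph H S).edgeSet) ∩ G.edgeSet).ncard
        ≤ (H.edgeSet \ (splitGraph H S).edgeSet).ncard := by
      rw [hPcard]
      have hkey : 2 * (R.ncard - 1 - Y.ncard) ≤ R.ncard - 1 := by omega
      calc 2 * ((H.edgeSet \ (splitGraph H S).edgeSet) ∩ G.edgeSet).ncard
          ≤ 2 * ((R.ncard - 1 - Y.ncard) * X.ncard) := by
            exact Nat.mul_le_mul_left 2 hPGcard
        _ = (2 * (R.ncard - 1 - Y.ncard)) * X.ncard := by ring
        _ ≤ (R.ncard - 1) * X.ncard := Nat.mul_le_mul_right _ hkey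
        _ ≤ (C.ncard - X.ncard) + (R.ncard - 1) * X.ncard := Nat.le_add_left _ _
    refine ⟨splitGraph H S, ⟨splitGraph_bicluster hHb,
      fun H'' hH'' => le_trans (editCost_le_of_le hsub hc) (hHopt.2 H'' hH'')⟩, ?_⟩
    intro h
    exact hbS (h.2.mp haS)
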